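/- (Correctness of the query algorithm, distinct components) Let v1, v2 be vertices with P v1 = i, P v2 = j, and i ≠ j. Then dist_G(v1,v2) equals the infimum over b1 ∈ B(C_i) and b2 ∈ B(C_j) of dist_{C_i}(v1,b1) + dist_BG(b1,b2) + dist_{C_j}(b2,v2). -/

import Mathlib

open scoped ENNReal

namespace SPQ

variable {V : Type*} {ι : Type*}

/-- The length of a walk: the sum of the weights `w` over its consecutive edges. -/
noncomputable def wlen (w : V → V → ℝ≥0∞) {G : SimpleGraph V} {u v : V} (p : G.Walk u v) : ℝ≥0∞ :=
  (p.darts.map fun d => w d.toProd.1 d.toProd.2).sum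

/-- The shortest-path distance: infimum of lengths of all walks (⊤ if none exists). -/
noncomputable def gdist (G : SimpleGraph V) (w : V → V → ℝ≥0∞) (u v : V) : ℝ≥0∞ :=
  ⨅ p : G.Walk u v, wlen w p

/-- The component `C_i`: the subgraph of `G` induced on `P ⁻¹ {i}`
(as a graph on `V`: edges of `G` with both endpoints mapped to `i` by `P`). -/
def comp (G : SimpleGraph V) (P : V → ι) (i : ι) : SimpleGraph V where
  Adj u v := G.Adj u v ∧ P u = i ∧ P v = i
  symm := ⟨fun _ _ h => ⟨h.1.symm, h.2.2, h.2.1⟩⟩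
  loopless := ⟨fun u h => G.irrefl h.1⟩

/-- The boundary `B(C_i)`: vertices of component `i` having a `G`-neighbor
in a different component. -/
def bdry (G : SimpleGraph V) (P : V → ι) (i : ι) : Set V :=
  {v | P v = i ∧ ∃ u, G.Adj v u ∧ P u ≠ i}

/-- The set `B` of all boundary vertices. -/
def bdryAll (G : SimpleGraph V) (P : V → ι) : Set V :=
  ⋃ i, bdry G P i

/-- The boundary graph `BG`: distinct boundary vertices `b1, b2` are adjacent
iff `P b1 = P b2` or `G.Adj b1 b2`. -/
def BGraph (G : SimpleGraph V) (P : V → ι) : SimpleGraph V where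
  Adj b1 b2 := b1 ≠ b2 ∧ b1 ∈ bdryAll G P ∧ b2 ∈ bdryAll G P ∧ (P b1 = P b2 ∨ G.Adj b1 b2)
  symm := by
    constructor
    intro u v h
    refine ⟨h.1.symm, h.2.2.1, h.2.1, ?_⟩
    rcases h.2.2.2 with h' | h'
    · exact Or.inl h'.symm
    · exact Or.inr h'.symm
  loopless := ⟨fun u h => h.1 rfl⟩

open Classical in
/-- The edge weight of the boundary graph:
`wt b1 b2 = dist_{C_{P b1}}(b1, b2)` if `P b1 = P b2`, and `w b1 b2` otherwise. -/
noncomputable def wt (G : SimpleGraph V) (P : V → ι) (w : V → V → ℝ≥0∞) (b1 b2 : V) : ℝ≥0∞ :=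
  if P b1 = P b2 then gdist (comp G P (P b1)) w b1 b2 else w b1 b2

section Aux
variable {G : SimpleGraph V} {w : V → V → ℝ≥0∞} {P : V → ι} {u v x : V}

@[simp] lemma wlen_nil : wlen w (SimpleGraph.Walk.nil : G.Walk u u) = 0 := rfl

@[simp] lemma wlen_cons (h : G.Adj u v) (p : G.Walk v x) :
    wlen w (SimpleGraph.Walk.cons h p) = w u v + wlen w p := by
  simp [wlen]

lemma gdist_le (p : G.Walk u v) : gdist G w u v ≤ wlen w p := iInf_le _ p

lemma gdist_self_le : gdist G w u u ≤ 0 := by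
  simpa using gdist_le (SimpleGraph.Walk.nil : G.Walk u u)

lemma gdist_adj (h : G.Adj u v) : gdist G w u v ≤ w u v := by
  simpa using gdist_le (SimpleGraph.Walk.cons h SimpleGraph.Walk.nil)

lemma wlen_append (p : G.Walk u v) (q : G.Walk v x) :
    wlen w (p.append q) = wlen w p + wlen w q := by
  induction p with
  | nil => simp
  | cons h p ih => simp [ih, add_assoc]

lemma gdist_triangle : gdist G w u x ≤ gdist G w u v + gdist G w v x := by
  have h : gdist G w u v + gdist G w v x
      = ⨅ p : G.Walk u v, ⨅ q : G.Walk v x, (wlen w p + wlen w q) := by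
    rw [gdist, ENNReal.iInf_add]
    exact iInf_congr fun p => by rw [gdist, ENNReal.add_iInf]
  rw [h]
  exact le_iInf fun p => le_iInf fun q =>
    le_trans (gdist_le (p.append q)) (wlen_append p q).le

lemma gdist_anti {H : SimpleGraph V} (hHG : H ≤ G) : gdist G w u v ≤ gdist H w u v := by
  refine le_iInf fun p => ?_
  induction p with
  | nil => exact gdist_self_le
  | @cons a b c h p ih =>
      refine le_trans (gdist_triangle (v := b)) ?_
      rw [wlen_cons]
      exact add_le_add (gdist_adj (hHG h)) ih

lemma comp_le {k : ι} : comp G P k ≤ G := fun _ _ h => h.1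

lemma bdry_of_mem_bdryAll (hb : u ∈ bdryAll G P) : u ∈ bdry G P (P u) := by
  rcases Set.mem_iUnion.mp hb with ⟨k, hk⟩
  rcases hk with ⟨hpk, hk2⟩
  exact ⟨rfl, by rwa [hpk]⟩

/-- A walk staying in `P ⁻¹ {k}` witnesses the component distance. -/
lemma compDist {k : ι} (q : G.Walk u x) (hq : ∀ v ∈ q.support, P v = k) :
    gdist (comp G P k) w u x ≤ wlen w q := by
  induction q with
  | nil => simpa using gdist_self_le
  | @cons a b c h p ih =>
      have hab : (comp G P k).Adj a b :=
        ⟨h, hq a (by simp), hq b (by simp [SimpleGraph.Walk.support_cons])⟩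
      refine le_trans (gdist_triangle (v := b)) ?_
      rw [wlen_cons]
      exact add_le_add (gdist_adj hab) (ih fun v hv => hq v (by simp [SimpleGraph.Walk.support_cons, hv]))

/-- Decomposition at the first component-change edge. -/
lemma firstCross {b c : V} (p : G.Walk b c) (hcr : ∃ v ∈ p.support, P v ≠ P b) :
    ∃ x y, ∃ q : G.Walk b x, ∃ _ : G.Adj x y, ∃ r : G.Walk y c,
      wlen w p = wlen w q + w x y + wlen w r ∧ (∀ v ∈ q.support, P v = P b) ∧
      P x = P b ∧ P y ≠ P b ∧ r.length < p.length := by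
  induction p with
  | nil =>
      rcases hcr with ⟨v, hv, hne⟩
      simp at hv
      exact absurd (by rw [hv]) hne
  | @cons a d c h p ih =>
      by_cases hd : P d = P a
      · have hcr' : ∃ v ∈ p.support, P v ≠ P d := by
          rcases hcr with ⟨v, hv, hne⟩
          rcases (SimpleGraph.Walk.mem_support_iff _).mp hv with rfl | hv'
          · exact absurd rfl hne
          · exact ⟨v, hv', by rw [hd]; exact hne⟩
        rcases ih hcr' with ⟨x, y, q, e, r, hlen, hsup, hx, hy, hlt⟩
        refine ⟨x, y, SimpleGraph.Walk.cons h q, e, r, ?_, ?_, by rw [hx, hd], by rw [hd] at hy; exact hy, ?_⟩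
        · rw [wlen_cons, wlen_cons, hlen]; ring
        · intro v hv
          rcases (SimpleGraph.Walk.mem_support_iff _).mp hv with rfl | hv'
          · rfl
          · rw [hsup v hv', hd]
        · simpa [SimpleGraph.Walk.length_cons] using Nat.lt_succ_of_lt hlt
      · refine ⟨a, d, SimpleGraph.Walk.nil, h, p, by simp, ?_, rfl, hd, by simp⟩
        intro v hv; simp at hv; rw [hv]

lemma le_add_biInf {s : Set V} {f : V → ℝ≥0∞} {a c : ℝ≥0∞}
    (h : ∀ b2 ∈ s, c ≤ a + f b2) : c ≤ a + ⨅ b2 ∈ s, f b2 := by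
  rw [ENNReal.add_iInf]
  refine le_iInf fun b2 => ?_
  rw [ENNReal.add_iInf]
  exact le_iInf fun hb2 => h b2 hb2

/-- Walks in the boundary graph are overestimates of true distances. -/
lemma gdist_le_gdist_BGraph {b c : V} : gdist G w b c ≤ gdist (BGraph G P) (wt G P w) b c := by
  refine le_iInf fun p => ?_
  induction p with
  | nil => exact gdist_self_le
  | @cons a d c h p ih =>
      refine le_trans (gdist_triangle (v := d)) ?_
      rw [wlen_cons]
      refine add_le_add ?_ ih
      by_cases hpd : P a = P d
      · rw [wt, if_pos hpd]
        exact le_trans (gdist_anti comp_le) le_rfl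
      · rw [wt, if_neg hpd]
        rcases h.2.2.2 with h' | h'
        · exact absurd h' hpd
        · exact gdist_adj h'

/-- The key induction: any `G`-walk from a boundary vertex `b` to `v2` is at least the
infimum over boundary vertices `b2` of component `P v2` of `dist_BG b b2 + dist_comp b2 v2`. -/
lemma key {v2 : V} : ∀ n (b : V), b ∈ bdryAll G P → ∀ r : G.Walk b v2, r.length ≤ n →
    (⨅ b2 ∈ bdry G P (P v2),
      (gdist (BGraph G P) (wt G P w) b b2 + gdist (comp G P (P v2)) w b2 v2)) ≤ wlen w r := by
  intro n
  induction n with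
  | zero =>
      intro b hb r hr
      by_cases hall : ∀ v ∈ r.support, P v = P b
      · have hbv2 : P v2 = P b := hall v2 r.end_mem_support
        have hbj : b ∈ bdry G P (P v2) := by rw [hbv2]; exact bdry_of_mem_bdryAll hb
        refine le_trans (iInf₂_le b hbj) ?_
        have h1 : gdist (BGraph G P) (wt G P w) b b ≤ 0 := gdist_self_le
        have h2 : gdist (comp G P (P v2)) w b v2 ≤ wlen w r :=
          compDist r (by intro v hv; rw [hall v hv, ← hbv2])
        calc _ ≤ 0 + wlen w r := add_le_add h1 h2
          _ = wlen w r := by rw [zero_add]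
      · push_neg at hall
        rcases firstCross (w := w) r hall with ⟨x, y, q, e, r', hlen, hsup, hx, hy, hlt⟩
        omega
  | succ n ih =>
      intro b hb r hr
      by_cases hall : ∀ v ∈ r.support, P v = P b
      · have hbv2 : P v2 = P b := hall v2 r.end_mem_support
        have hbj : b ∈ bdry G P (P v2) := by rw [hbv2]; exact bdry_of_mem_bdryAll hb
        refine le_trans (iInf₂_le b hbj) ?_
        have h1 : gdist (BGraph G P) (wt G P w) b b ≤ 0 := gdist_self_le
        have h2 : gdist (comp G P (P v2)) w b v2 ≤ wlen w r :=
          compDist r (by intro v hv; rw [hall v hv, ← hbv2])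
        calc _ ≤ 0 + wlen w r := add_le_add h1 h2
          _ = wlen w r := by rw [zero_add]
      · push_neg at hall
        rcases firstCross (w := w) r hall with ⟨x, y, q, e, r', hlen, hsup, hx, hy, hlt⟩
        have hxB : x ∈ bdry G P (P b) := ⟨hx, y, e, hy⟩
        have hyB : y ∈ bdryAll G P := by
          refine Set.mem_iUnion.mpr ⟨P y, rfl, x, e.symm, ?_⟩
          rw [hx]; exact fun hxy => hy hxy.symm
        have hIH := ih y hyB r' (by omega)
        -- dist in BG from b to x
        have hbx : gdist (BGraph G P) (wt G P w) b x ≤ wlen w q := by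
          by_cases hbeq : b = x
          · subst hbeq; exact le_trans gdist_self_le zero_le
          · have hadj : (BGraph G P).Adj b x :=
              ⟨hbeq, hb, Set.mem_iUnion.mpr ⟨P b, hxB⟩, Or.inl hx.symm⟩
            refine le_trans (gdist_adj hadj) ?_
            rw [wt, if_pos hx.symm]
            exact compDist q hsup
        have hxy : gdist (BGraph G P) (wt G P w) x y ≤ w x y := by
          have hadj : (BGraph G P).Adj x y :=
            ⟨e.ne, Set.mem_iUnion.mpr ⟨P b, hxB⟩, hyB, Or.inr e⟩
          refine le_trans (gdist_adj hadj) ?_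
          rw [wt, if_neg (by rw [hx]; exact fun hc => hy hc.symm)]
        have hstep : (⨅ b2 ∈ bdry G P (P v2),
            (gdist (BGraph G P) (wt G P w) b b2 + gdist (comp G P (P v2)) w b2 v2)) ≤
            (wlen w q + w x y) + ⨅ b2 ∈ bdry G P (P v2),
              (gdist (BGraph G P) (wt G P w) y b2 + gdist (comp G P (P v2)) w b2 v2) := by
          refine le_add_biInf ?_
          intro b2 hb2
          refine le_trans (iInf₂_le b2 hb2) ?_
          have htri : gdist (BGraph G P) (wt G P w) b b2 ≤
              wlen w q + w x y + gdist (BGraph G P) (wt G P w) y b2 := by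
            calc gdist (BGraph G P) (wt G P w) b b2
                ≤ gdist (BGraph G P) (wt G P w) b x + gdist (BGraph G P) (wt G P w) x b2 :=
                  gdist_triangle
              _ ≤ gdist (BGraph G P) (wt G P w) b x + (gdist (BGraph G P) (wt G P w) x y +
                  gdist (BGraph G P) (wt G P w) y b2) := add_le_add le_rfl gdist_triangle
              _ ≤ wlen w q + (w x y + gdist (BGraph G P) (wt G P w) y b2) :=
                  add_le_add hbx (add_le_add hxy le_rfl)
              _ = wlen w q + w x y + gdist (BGraph G P) (wt G P w) y b2 := by ring
          calc gdist (BGraph G P) (wt G P w) b b2 + gdist (comp G P (P v2)) w b2 v2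
              ≤ (wlen w q + w x y + gdist (BGraph G P) (wt G P w) y b2) +
                gdist (comp G P (P v2)) w b2 v2 := add_le_add htri le_rfl
            _ = (wlen w q + w x y) + (gdist (BGraph G P) (wt G P w) y b2 +
                gdist (comp G P (P v2)) w b2 v2) := by ring
        calc _ ≤ _ := hstep
          _ ≤ (wlen w q + w x y) + wlen w r' := add_le_add le_rfl hIH
          _ = wlen w r := hlen.symm

end Aux

/-- Correctness of the query algorithm, distinct components: Let `v1, v2`
be vertices with `P v1 = i`, `P v2 = j`, and `i ≠ j`. Then `dist_G(v1,v2)` equals the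
infimum over `b1 ∈ B(C_i)` and `b2 ∈ B(C_j)` of
`dist_{C_i}(v1,b1) + dist_BG(b1,b2) + dist_{C_j}(b2,v2)`. -/
theorem stmt9 {V : Type*} {ι : Type*} [Fintype V] [Fintype ι]
    (G : SimpleGraph V) (w : V → V → ℝ≥0∞)
    (hsymm : ∀ u v, w u v = w v u) (hfin : ∀ u v, G.Adj u v → w u v < ⊤)
    (P : V → ι) (i j : ι) (v1 v2 : V) (h1 : P v1 = i) (h2 : P v2 = j) (hij : i ≠ j) :
    gdist G w v1 v2 =
      ⨅ b1 ∈ bdry G P i, ⨅ b2 ∈ bdry G P j,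
        (gdist (comp G P i) w v1 b1 + gdist (BGraph G P) (wt G P w) b1 b2 +
          gdist (comp G P j) w b2 v2) := by
  refine le_antisymm ?_ ?_
  · refine le_iInf fun b1 => le_iInf fun hb1 => le_iInf fun b2 => le_iInf fun hb2 => ?_
    calc gdist G w v1 v2
        ≤ gdist G w v1 b1 + gdist G w b1 v2 := gdist_triangle
      _ ≤ gdist G w v1 b1 + (gdist G w b1 b2 + gdist G w b2 v2) :=
          add_le_add le_rfl gdist_triangle
      _ ≤ gdist (comp G P i) w v1 b1 + (gdist (BGraph G P) (wt G P w) b1 b2 +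
          gdist (comp G P j) w b2 v2) :=
          add_le_add (gdist_anti comp_le)
            (add_le_add gdist_le_gdist_BGraph (gdist_anti comp_le))
      _ = gdist (comp G P i) w v1 b1 + gdist (BGraph G P) (wt G P w) b1 b2 +
          gdist (comp G P j) w b2 v2 := by ring
  · refine le_iInf fun p => ?_
    have hcr : ∃ v ∈ p.support, P v ≠ P v1 :=
      ⟨v2, p.end_mem_support, by rw [h1, h2]; exact fun h => hij h.symm⟩
    rcases firstCross (w := w) p hcr with ⟨x, y, q, e, r, hlen, hsup, hx, hy, hlt⟩
    have hxB : x ∈ bdry G P i := by rw [← h1]; exact ⟨hx, y, e, hy⟩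
    have hyB : y ∈ bdryAll G P := by
      refine Set.mem_iUnion.mpr ⟨P y, rfl, x, e.symm, ?_⟩
      rw [hx]; exact fun h => hy h.symm
    have hkey := key (w := w) r.length y hyB r le_rfl
    rw [h2] at hkey
    have hq : gdist (comp G P i) w v1 x ≤ wlen w q :=
      compDist q fun v hv => h1 ▸ hsup v hv
    have hxy : gdist (BGraph G P) (wt G P w) x y ≤ w x y := by
      have hadj : (BGraph G P).Adj x y :=
        ⟨e.ne, Set.mem_iUnion.mpr ⟨i, hxB⟩, hyB, Or.inr e⟩
      refine le_trans (gdist_adj hadj) ?_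
      rw [wt, if_neg (by rw [hx]; exact fun hc => hy hc.symm)]
    have hstep : (⨅ b1 ∈ bdry G P i, ⨅ b2 ∈ bdry G P j,
        (gdist (comp G P i) w v1 b1 + gdist (BGraph G P) (wt G P w) b1 b2 +
          gdist (comp G P j) w b2 v2)) ≤
        (wlen w q + w x y) + ⨅ b2 ∈ bdry G P j,
          (gdist (BGraph G P) (wt G P w) y b2 + gdist (comp G P j) w b2 v2) := by
      refine le_add_biInf ?_
      intro b2 hb2
      refine le_trans (iInf₂_le x hxB) (le_trans (iInf₂_le b2 hb2) ?_)
      have hxb2 : gdist (BGraph G P) (wt G P w) x b2 ≤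
          w x y + gdist (BGraph G P) (wt G P w) y b2 :=
        le_trans gdist_triangle (add_le_add hxy le_rfl)
      calc gdist (comp G P i) w v1 x + gdist (BGraph G P) (wt G P w) x b2 +
          gdist (comp G P j) w b2 v2
          ≤ wlen w q + (w x y + gdist (BGraph G P) (wt G P w) y b2) +
            gdist (comp G P j) w b2 v2 := add_le_add (add_le_add hq hxb2) le_rfl
        _ = (wlen w q + w x y) + (gdist (BGraph G P) (wt G P w) y b2 +
            gdist (comp G P j) w b2 v2) := by ring
    calc _ ≤ _ := hstep
      _ ≤ (wlen w q + w x y) + wlen w r := add_le_add le_rfl hkey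
      _ = wlen w p := hlen.symm

end SPQ
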